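/- arXiv:1102.2038 — 3 statements merged into one kernel-verified Lean document; each statement's English description precedes it below -/
import Mathlib

section
/- Let f(x₀,r) be a scalar-valued infinitely differentiable function on an open subset of ℝ² (variables x₀ and r, with r > 0). Then for every integer m ≥ 1, ∂_r² D^r(m){f} = D^r(m){∂_r² f} − 2m · D^r(m+1){f}. -/
noncomputable section

/-- Partial derivative with respect to the second variable `r` of a function on `ℝ²`. -/
def pr2 (g : ℝ × ℝ → ℝ) (p : ℝ × ℝ) : ℝ := fderiv ℝ g p (0, 1)

/-- The operator `D_r(m) = ((1/r) ∂_r)^m`. -/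
def DrOp : ℕ → (ℝ × ℝ → ℝ) → (ℝ × ℝ → ℝ)
  | 0, f => f
  | m + 1, f => fun p => (1 / p.2) * pr2 (DrOp m f) p

/-- The operator `D^r(m)`, defined by `D^r(0){f} = f` and `D^r(m){f} = ∂_r (D^r(m-1){f} / r)`. -/
def DRop : ℕ → (ℝ × ℝ → ℝ) → (ℝ × ℝ → ℝ)
  | 0, f => f
  | m + 1, f => fun p => pr2 (fun q => DRop m f q / q.2) p

lemma pr2_div {g : ℝ × ℝ → ℝ} {p : ℝ × ℝ} (hg : DifferentiableAt ℝ g p) (hr : p.2 ≠ 0) :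
    pr2 (fun q => g q / q.2) p = pr2 g p / p.2 - g p / p.2 ^ 2 := by
  have hinv : HasFDerivAt (fun q : ℝ × ℝ => (q.2)⁻¹)
      ((-ContinuousLinearMap.mulLeftRight ℝ ℝ (p.2)⁻¹ (p.2)⁻¹).comp
        (ContinuousLinearMap.snd ℝ ℝ ℝ)) p :=
    (hasFDerivAt_inv' hr).comp p hasFDerivAt_snd
  have H : HasFDerivAt (fun q => g q * (q.2)⁻¹) _ p := hg.hasFDerivAt.mul hinv
  simp only [pr2]
  rw [show (fun q : ℝ × ℝ => g q / q.2) = fun q => g q * (q.2)⁻¹ from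
      funext fun q => div_eq_mul_inv _ _, H.fderiv]
  simp
  field_simp
  ring

lemma pr2_sub {A B : ℝ × ℝ → ℝ} {p : ℝ × ℝ}
    (hA : DifferentiableAt ℝ A p) (hB : DifferentiableAt ℝ B p) :
    pr2 (fun q => A q - B q) p = pr2 A p - pr2 B p := by
  have H : HasFDerivAt (fun q => A q - B q) _ p := hA.hasFDerivAt.sub hB.hasFDerivAt
  simp only [pr2, H.fderiv]
  simp

lemma pr2_sub_const_mul {A B : ℝ × ℝ → ℝ} {p : ℝ × ℝ} (c : ℝ)
    (hA : DifferentiableAt ℝ A p) (hB : DifferentiableAt ℝ B p) :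
    pr2 (fun q => A q - c * B q) p = pr2 A p - c * pr2 B p := by
  have H : HasFDerivAt (fun q => A q - c * B q) _ p := hA.hasFDerivAt.sub (hB.hasFDerivAt.const_mul c)
  simp only [pr2, H.fderiv]
  simp

lemma pr2_congr {A B : ℝ × ℝ → ℝ} {U : Set (ℝ × ℝ)} (hU : IsOpen U) {p : ℝ × ℝ}
    (hp : p ∈ U) (h : ∀ q ∈ U, A q = B q) : pr2 A p = pr2 B p := by
  have : A =ᶠ[nhds p] B := Filter.eventually_of_mem (hU.mem_nhds hp) h
  simp only [pr2, this.fderiv_eq]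

lemma contDiffAt_pr2 {g : ℝ × ℝ → ℝ} {p : ℝ × ℝ} (hg : ContDiffAt ℝ (⊤ : ℕ∞) g p) :
    ContDiffAt ℝ (⊤ : ℕ∞) (pr2 g) p :=
  (hg.fderiv_right (by exact_mod_cast le_top)).clm_apply contDiffAt_const

lemma contDiffAt_div_snd {g : ℝ × ℝ → ℝ} {p : ℝ × ℝ} (hg : ContDiffAt ℝ (⊤ : ℕ∞) g p)
    (hr : p.2 ≠ 0) : ContDiffAt ℝ (⊤ : ℕ∞) (fun q => g q / q.2) p :=
  hg.div contDiffAt_snd hr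

lemma contDiffAt_DRop {f : ℝ × ℝ → ℝ} {U : Set (ℝ × ℝ)}
    (hpos : ∀ q ∈ U, (q : ℝ × ℝ).2 ≠ 0)
    (hf : ∀ q ∈ U, ContDiffAt ℝ (⊤ : ℕ∞) f q) (k : ℕ) :
    ∀ q ∈ U, ContDiffAt ℝ (⊤ : ℕ∞) (DRop k f) q := by
  induction k with
  | zero => exact hf
  | succ k ih =>
    intro q hq
    exact contDiffAt_pr2 (contDiffAt_div_snd (ih q hq) (hpos q hq))

/-- Lemma 3.1 (ii): `∂_r² D^r(m){f} = D^r(m){∂_r² f} − 2m · D^r(m+1){f}`. -/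
theorem partial_r_sq_DRop (f : ℝ × ℝ → ℝ) (U : Set (ℝ × ℝ)) (hU : IsOpen U)
    (hUpos : U ⊆ {p : ℝ × ℝ | 0 < p.2}) (hf : ContDiffOn ℝ (⊤ : ℕ∞) f U)
    (m : ℕ) (hm : 1 ≤ m) :
    ∀ p ∈ U, pr2 (pr2 (DRop m f)) p
      = DRop m (fun q => pr2 (pr2 f) q) p - 2 * (m : ℝ) * DRop (m + 1) f p := by
  have hpos : ∀ q ∈ U, (q : ℝ × ℝ).2 ≠ 0 := fun q hq => ne_of_gt (hUpos hq)
  have hf' : ∀ q ∈ U, ContDiffAt ℝ (⊤ : ℕ∞) f q := fun q hq => hf.contDiffAt (hU.mem_nhds hq)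
  have hD2f : ∀ q ∈ U, ContDiffAt ℝ (⊤ : ℕ∞) (fun q' => pr2 (pr2 f) q') q := fun q hq =>
    contDiffAt_pr2 (contDiffAt_pr2 (hf' q hq))
  clear hm
  induction m with
  | zero => intro p hp; simp [DRop]
  | succ k ih =>
    have hgk := contDiffAt_DRop hpos hf' k
    have hgk1 := contDiffAt_DRop hpos hf' (k + 1)
    have hYk := contDiffAt_DRop hpos hD2f k
    -- Step E : formula for pr2 (DRop (k+1) f) on U
    have E : ∀ q ∈ U, pr2 (DRop (k + 1) f) q
        = DRop k (fun q' => pr2 (pr2 f) q') q / q.2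
          - (2 * (k : ℝ) + 2) * (DRop (k + 1) f q / q.2) := by
      intro q hq
      have hq2 := hpos q hq
      have dg : DifferentiableAt ℝ (DRop k f) q := (hgk q hq).differentiableAt (by simp)
      have cF : ContDiffAt ℝ (⊤ : ℕ∞) (fun q' => DRop k f q' / q'.2) q :=
        contDiffAt_div_snd (hgk q hq) hq2
      have dF : DifferentiableAt ℝ (fun q' => DRop k f q' / q'.2) q :=
        cF.differentiableAt (by simp)
      have dpg : DifferentiableAt ℝ (fun q' => pr2 (DRop k f) q' / q'.2) q :=
        (contDiffAt_div_snd (contDiffAt_pr2 (hgk q hq)) hq2).differentiableAt (by simp)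
      have dFF : DifferentiableAt ℝ (fun q' => DRop k f q' / q'.2 / q'.2) q :=
        (contDiffAt_div_snd cF hq2).differentiableAt (by simp)
      calc pr2 (DRop (k + 1) f) q
          = pr2 (fun q' => pr2 (DRop k f) q' / q'.2 - DRop k f q' / q'.2 / q'.2) q := by
            refine pr2_congr hU hq ?_
            intro q' hq'
            have h2 := hpos q' hq'
            simp only [DRop]
            rw [pr2_div ((hgk q' hq').differentiableAt (by simp)) h2]
            field_simp
        _ = pr2 (fun q' => pr2 (DRop k f) q' / q'.2) q
            - pr2 (fun q' => DRop k f q' / q'.2 / q'.2) q := pr2_sub dpg dFF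
        _ = (pr2 (pr2 (DRop k f)) q / q.2 - pr2 (DRop k f) q / q.2 ^ 2)
            - (pr2 (fun q' => DRop k f q' / q'.2) q / q.2 - (DRop k f q / q.2) / q.2 ^ 2) := by
            rw [pr2_div ((contDiffAt_pr2 (hgk q hq)).differentiableAt (by simp)) hq2,
              pr2_div dF hq2]
        _ = DRop k (fun q' => pr2 (pr2 f) q') q / q.2
            - (2 * (k : ℝ) + 2) * (DRop (k + 1) f q / q.2) := by
            have eX : pr2 (fun q' => DRop k f q' / q'.2) q
                = pr2 (DRop k f) q / q.2 - DRop k f q / q.2 ^ 2 := pr2_div dg hq2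
            have eIH := ih q hq
            simp only [DRop] at eIH ⊢
            rw [eIH, eX]
            field_simp
            ring
    intro p hp
    have hp2 := hpos p hp
    have dY : DifferentiableAt ℝ
        (fun q => DRop k (fun q' => pr2 (pr2 f) q') q / q.2) p :=
      (contDiffAt_div_snd (hYk p hp) hp2).differentiableAt (by simp)
    have dG : DifferentiableAt ℝ (fun q => DRop (k + 1) f q / q.2) p :=
      (contDiffAt_div_snd (hgk1 p hp) hp2).differentiableAt (by simp)
    calc pr2 (pr2 (DRop (k + 1) f)) p
        = pr2 (fun q => DRop k (fun q' => pr2 (pr2 f) q') q / q.2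
            - (2 * (k : ℝ) + 2) * (DRop (k + 1) f q / q.2)) p := pr2_congr hU hp E
      _ = pr2 (fun q => DRop k (fun q' => pr2 (pr2 f) q') q / q.2) p
          - (2 * (k : ℝ) + 2) * pr2 (fun q => DRop (k + 1) f q / q.2) p :=
          pr2_sub_const_mul _ dY dG
      _ = DRop (k + 1) (fun q => pr2 (pr2 f) q) p
          - 2 * ((k : ℕ) + 1 : ℝ) * DRop (k + 1 + 1) f p := by
          simp only [DRop]
          push_cast
          ring
      _ = DRop (k + 1) (fun q => pr2 (pr2 f) q) p
          - 2 * ((k + 1 : ℕ) : ℝ) * DRop (k + 1 + 1) f p := by push_cast; ring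
end
end

section
/- Let k ∈ ℕ and let P_n be a homogeneous Dunkl-monogenic polynomial of degree n on ℝ^d with values in ℝ_{0,d}. Then D̲(x̲^k P_n(x̲)) = −k x̲^{k−1} P_n(x̲) if k is even, and D̲(x̲^k P_n(x̲)) = −(k + μ + 2n − 1) x̲^{k−1} P_n(x̲) if k is odd, where x̲^k denotes the k-th power of the Clifford vector x̲ inside ℝ_{0,d}. -/
open scoped BigOperators RealInnerProductSpace

noncomputable section

/-- Euclidean space `ℝ^d`. -/
abbrev Vd (d : ℕ) := EuclideanSpace ℝ (Fin d)

/-- The reflection `σ_a x = x − 2(⟪a,x⟫/|a|²) a` in the hyperplane orthogonal to `a`. -/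
def reflect {d : ℕ} (a x : Vd d) : Vd d := x - ((2 * ⟪a, x⟫) / ⟪a, a⟫) • a

/-- A finite root system `R` with a choice of positive subsystem `Rp` and a `W`-invariant
multiplicity function `kap`. -/
structure DunklData (d : ℕ) where
  R : Finset (Vd d)
  Rp : Finset (Vd d)
  kap : Vd d → ℝ
  zero_not_mem : (0 : Vd d) ∉ R
  inter_line : ∀ a ∈ R, ∀ c : ℝ, c • a ∈ R → c = 1 ∨ c = -1
  reflect_mem : ∀ a ∈ R, ∀ b ∈ R, reflect a b ∈ R
  Rp_subset : Rp ⊆ R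
  pos_split : ∀ a ∈ R, Xor' (a ∈ Rp) (-a ∈ Rp)
  kap_nonneg : ∀ a ∈ R, 0 ≤ kap a
  kap_invariant : ∀ a ∈ R, ∀ b ∈ R, kap (reflect a b) = kap b

/-- The index `γ_κ = Σ_{α ∈ R₊} κ(α)`. -/
def gam {d : ℕ} (S : DunklData d) : ℝ := ∑ a ∈ S.Rp, S.kap a

/-- The Dunkl dimension `μ = 2γ_κ + d`. -/
def dunklDim {d : ℕ} (S : DunklData d) : ℝ := 2 * gam S + d

variable {d : ℕ} {A : Type*} [NormedRing A] [NormedAlgebra ℝ A]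

/-- The Clifford algebra relations `e_i e_j + e_j e_i = −2δ_{ij}` for the generators of
`ℝ_{0,d}`, together with linear independence of the basis products `e_A`. -/
def CliffordRel (e : Fin d → A) : Prop :=
  (∀ i j, e i * e j + e j * e i = if i = j then (-2 : A) else 0) ∧
    LinearIndependent ℝ (fun s : Finset (Fin d) => ((s.sort (· ≤ ·)).map e).prod)

/-- The Clifford vector `x̲ = Σ x_i e_i` associated to `x ∈ ℝ^d`. -/
def vecC (e : Fin d → A) (x : Vd d) : A := ∑ i, x i • e i

/-- The Dunkl difference quotient `(f(x) − f(σ_a x)) / ⟪a, x⟫`, extended by continuity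
(for differentiable `f`) across the hyperplane `⟪a, x⟫ = 0`. -/
def dQuot (a : Vd d) (f : Vd d → A) (x : Vd d) : A :=
  if ⟪a, x⟫ = 0 then (2 / ⟪a, a⟫) • fderiv ℝ f x a
  else (⟪a, x⟫)⁻¹ • (f x - f (reflect a x))

/-- The Dunkl operator `T_{x_i}` on `ℝ^d`. -/
def dunklT (S : DunklData d) (i : Fin d) (f : Vd d → A) (x : Vd d) : A :=
  fderiv ℝ f x (EuclideanSpace.single i 1) + ∑ a ∈ S.Rp, (S.kap a * a i) • dQuot a f x

/-- The Dunkl-Dirac operator `D̲ = Σ e_i T_{x_i}` on `ℝ^d`. -/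
def diracD (e : Fin d → A) (S : DunklData d) (f : Vd d → A) (x : Vd d) : A :=
  ∑ i, e i * dunklT S i f x

lemma inner_eq_sum (a x : Vd d) : ⟪a, x⟫ = ∑ i, a i * x i := by
  simp [PiLp.inner_apply, RCLike.inner_apply, conj_trivial]
  exact Finset.sum_congr rfl fun i _ => mul_comm _ _

lemma reflect_of_inner_eq_zero (a x : Vd d) (h : ⟪a,x⟫ = 0) : reflect a x = x := by
  simp [reflect, h]

lemma reflect_coord (a x : Vd d) (j : Fin d) :
    reflect a x j = x j - (2*⟪a,x⟫/⟪a,a⟫) * a j := by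
  simp [reflect]

lemma sum_coord_single (x : Vd d) : ∑ i, x i • EuclideanSpace.single i (1:ℝ) = x := by
  ext j
  rw [WithLp.ofLp_sum, Finset.sum_apply]
  simp [EuclideanSpace.single_apply]

lemma gen_sq (e : Fin d → A)
    (he : ∀ i j, e i * e j + e j * e i = if i = j then (-2 : A) else 0) (i : Fin d) :
    e i * e i = -1 := by
  have h := he i i
  simp only [if_pos rfl] at h
  have h2 : (2:ℝ) • (e i * e i) = (2:ℝ) • (-1 : A) := by
    rw [two_smul, h, two_smul]; norm_num
  exact smul_right_injective A two_ne_zero h2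

def vecCL (e : Fin d → A) : Vd d →L[ℝ] A :=
  ∑ i, (EuclideanSpace.proj i : Vd d →L[ℝ] ℝ).smulRight (e i)

lemma vecCL_apply (e : Fin d → A) (x : Vd d) : vecCL e x = vecC e x := by
  simp [vecCL, vecC, ContinuousLinearMap.sum_apply]

lemma vecC_smul (e : Fin d → A) (c : ℝ) (x : Vd d) : vecC e (c • x) = c • vecC e x := by
  rw [← vecCL_apply, ← vecCL_apply, map_smul]

lemma diff_vecC (e : Fin d → A) : Differentiable ℝ (fun y : Vd d => vecC e y) := by
  have : (fun y : Vd d => vecC e y) = fun y => vecCL e y := by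
    funext y; rw [vecCL_apply]
  rw [this]
  exact (vecCL e).differentiable

lemma diff_vecC_pow (e : Fin d → A) (k : ℕ) :
    Differentiable ℝ (fun y : Vd d => vecC e y ^ k) := by
  induction k with
  | zero => simpa using differentiable_const (1:A)
  | succ k ih =>
    have : (fun y : Vd d => vecC e y ^ (k+1)) = fun y => vecC e y ^ k * vecC e y := by
      funext y; rw [pow_succ]
    rw [this]; exact ih.mul (diff_vecC e)

lemma neg_two_smul_one : ((-2:ℝ)) • (1:A) = (-2:A) := by
  rw [← Algebra.algebraMap_eq_smul_one, map_neg, map_ofNat]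

lemma vec_sq (e : Fin d → A)
    (he : ∀ i j, e i * e j + e j * e i = if i = j then (-2 : A) else 0) (a : Vd d) :
    vecC e a * vecC e a = (-⟪a,a⟫ : ℝ) • 1 := by
  have expand : vecC e a * vecC e a = ∑ i, ∑ j, (a i * a j) • (e i * e j) := by
    rw [vecC, Finset.sum_mul]
    refine Finset.sum_congr rfl fun i _ => ?_
    rw [smul_mul_assoc, Finset.mul_sum, Finset.smul_sum]
    refine Finset.sum_congr rfl fun j _ => ?_
    rw [mul_smul_comm, smul_smul]
  have expand2 : vecC e a * vecC e a = ∑ i, ∑ j, (a i * a j) • (e j * e i) := by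
    rw [expand, Finset.sum_comm]
    refine Finset.sum_congr rfl fun i _ => Finset.sum_congr rfl fun j _ => ?_
    rw [mul_comm (a j)]
  have key : (2:ℝ) • (vecC e a * vecC e a) = (2:ℝ) • ((-⟪a,a⟫ : ℝ) • (1:A)) := by
    rw [two_smul]
    nth_rewrite 1 [expand]
    nth_rewrite 1 [expand2]
    rw [← Finset.sum_add_distrib]
    have step : ∀ i : Fin d,
        ((∑ j, (a i * a j) • (e i * e j)) + ∑ j, (a i * a j) • (e j * e i))
          = ((a i * a i) * (-2:ℝ)) • (1:A) := by
      intro i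
      rw [← Finset.sum_add_distrib]
      have : ∀ j : Fin d, (a i * a j) • (e i * e j) + (a i * a j) • (e j * e i)
          = if i = j then (a i * a j) • (-2:A) else 0 := by
        intro j
        rw [← smul_add, he i j]
        by_cases h : i = j
        · rw [if_pos h, if_pos h]
        · rw [if_neg h, if_neg h, smul_zero]
      rw [Finset.sum_congr rfl fun j _ => this j]
      rw [Finset.sum_ite_eq]
      rw [if_pos (Finset.mem_univ i), ← neg_two_smul_one, smul_smul]
    rw [Finset.sum_congr rfl fun i _ => step i, ← Finset.sum_smul, smul_smul]
    congr 1
    rw [inner_eq_sum, ← Finset.sum_mul]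
    ring
  exact smul_right_injective A two_ne_zero key

lemma hasFDerivAt_coord_smul {f : Vd d → A} {x : Vd d} (hf : DifferentiableAt ℝ f x)
    (j : Fin d) :
    HasFDerivAt (fun y => y j • f y)
      (x j • fderiv ℝ f x + (EuclideanSpace.proj (𝕜 := ℝ) j).smulRight (f x)) x := by
  exact ((EuclideanSpace.proj (𝕜 := ℝ) j).hasFDerivAt).smul hf.hasFDerivAt

lemma dQuot_coord_smul (a : Vd d) {f : Vd d → A} {x : Vd d}
    (hf : DifferentiableAt ℝ f x) (j : Fin d) :
    dQuot a (fun y => y j • f y) x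
      = x j • dQuot a f x + ((2 * a j) / ⟪a,a⟫) • f (reflect a x) := by
  unfold dQuot
  by_cases h : ⟪a,x⟫ = 0
  · rw [if_pos h, if_pos h, reflect_of_inner_eq_zero a x h,
      (hasFDerivAt_coord_smul hf j).fderiv]
    rw [ContinuousLinearMap.add_apply, ContinuousLinearMap.smul_apply,
      ContinuousLinearMap.smulRight_apply, smul_add, smul_smul, smul_smul, smul_smul]
    have : (EuclideanSpace.proj (𝕜 := ℝ) j) a = a j := rfl
    rw [this]
    congr 1
    · rw [mul_comm]
    · congr 1; ring
  · have hb : ((fun y => y j • f y) x - (fun y => y j • f y) (reflect a x))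
        = x j • f x - (reflect a x) j • f (reflect a x) := rfl
    have key : ∀ (t : ℝ) (u v : A), x j • u - (x j - t) • v = x j • (u - v) + t • v := by
      intro t u v; module
    rw [if_neg h, if_neg h, hb, reflect_coord a x j, key, smul_add]
    congr 1
    · rw [smul_smul, smul_smul, mul_comm]
    · rw [smul_smul]
      have hN : ⟪a,a⟫ ≠ 0 := fun h0 => h (by rw [inner_self_eq_zero.mp h0]; simp)
      congr 1
      rw [inner_eq_sum a x] at h
      rw [inner_eq_sum a a] at hN ⊢
      field_simp
      rw [mul_div_mul_left _ _ (show ⟪a,x⟫ ≠ 0 by rw [inner_eq_sum]; exact h)]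

lemma dQuot_const_mul (a : Vd d) (c : A) {f : Vd d → A} {x : Vd d}
    (hf : DifferentiableAt ℝ f x) :
    dQuot a (fun y => c * f y) x = c * dQuot a f x := by
  unfold dQuot
  by_cases h : ⟪a,x⟫ = 0
  · rw [if_pos h, if_pos h, fderiv_const_mul hf c, ContinuousLinearMap.smul_apply,
      smul_comm, smul_eq_mul, mul_smul_comm]
  · rw [if_neg h, if_neg h]
    have hb : ((fun y => c * f y) x - (fun y => c * f y) (reflect a x))
        = c * f x - c * f (reflect a x) := rfl
    rw [hb, ← mul_sub, mul_smul_comm]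

lemma dQuot_sum {ι : Type*} (s : Finset ι) (a : Vd d) (g : ι → Vd d → A) {x : Vd d}
    (hg : ∀ i ∈ s, DifferentiableAt ℝ (g i) x) :
    dQuot a (fun y => ∑ i ∈ s, g i y) x = ∑ i ∈ s, dQuot a (g i) x := by
  unfold dQuot
  by_cases h : ⟪a,x⟫ = 0
  · rw [if_pos h, fderiv_fun_sum hg, ContinuousLinearMap.sum_apply, Finset.smul_sum]
    exact Finset.sum_congr rfl fun i _ => by rw [if_pos h]
  · rw [if_neg h]
    have hb : ((fun y => ∑ i ∈ s, g i y) x - (fun y => ∑ i ∈ s, g i y) (reflect a x))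
        = ∑ i ∈ s, (g i x - g i (reflect a x)) := by
      rw [Finset.sum_sub_distrib]
    rw [hb, Finset.smul_sum]
    exact Finset.sum_congr rfl fun i _ => by rw [if_neg h]

lemma inner_smul_dQuot (a : Vd d) (f : Vd d → A) (x : Vd d) :
    ⟪a,x⟫ • dQuot a f x = f x - f (reflect a x) := by
  unfold dQuot
  by_cases h : ⟪a,x⟫ = 0
  · rw [if_pos h, h, reflect_of_inner_eq_zero a x h, zero_smul, sub_self]
  · rw [if_neg h, smul_smul, mul_inv_cancel₀ h, one_smul]

lemma dunklT_const_mul (S : DunklData d) (i : Fin d) (c : A) {f : Vd d → A} {x : Vd d}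
    (hf : DifferentiableAt ℝ f x) :
    dunklT S i (fun y => c * f y) x = c * dunklT S i f x := by
  unfold dunklT
  rw [fderiv_const_mul hf c, ContinuousLinearMap.smul_apply, smul_eq_mul, mul_add,
    Finset.mul_sum]
  congr 1
  exact Finset.sum_congr rfl fun a _ => by
    rw [dQuot_const_mul a c hf, mul_smul_comm]

lemma dunklT_sum {ι : Type*} (s : Finset ι) (S : DunklData d) (i : Fin d)
    (g : ι → Vd d → A) {x : Vd d} (hg : ∀ j ∈ s, DifferentiableAt ℝ (g j) x) :
    dunklT S i (fun y => ∑ j ∈ s, g j y) x = ∑ j ∈ s, dunklT S i (g j) x := by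
  unfold dunklT
  rw [fderiv_fun_sum hg, ContinuousLinearMap.sum_apply]
  have : ∀ a ∈ S.Rp, (S.kap a * a i) • dQuot a (fun y => ∑ j ∈ s, g j y) x
      = ∑ j ∈ s, (S.kap a * a i) • dQuot a (g j) x := by
    intro a _
    rw [dQuot_sum s a g hg, Finset.smul_sum]
  rw [Finset.sum_congr rfl this, Finset.sum_comm, ← Finset.sum_add_distrib]

lemma dunklT_coord_smul (S : DunklData d) (i : Fin d) {f : Vd d → A} {x : Vd d}
    (hf : DifferentiableAt ℝ f x) (j : Fin d) :
    dunklT S i (fun y => y j • f y) x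
      = (if j = i then (1:ℝ) else 0) • f x + x j • dunklT S i f x
        + ∑ a ∈ S.Rp, ((S.kap a * a i) * ((2 * a j)/⟪a,a⟫)) • f (reflect a x) := by
  unfold dunklT
  rw [(hasFDerivAt_coord_smul hf j).fderiv, ContinuousLinearMap.add_apply,
    ContinuousLinearMap.smul_apply, ContinuousLinearMap.smulRight_apply]
  have hproj : (EuclideanSpace.proj (𝕜 := ℝ) j) (EuclideanSpace.single i (1:ℝ))
      = if j = i then (1:ℝ) else 0 := by
    have : (EuclideanSpace.proj (𝕜 := ℝ) j) (EuclideanSpace.single i (1:ℝ))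
        = EuclideanSpace.single i (1:ℝ) j := rfl
    rw [this, EuclideanSpace.single_apply]
  rw [hproj]
  have hsum : ∑ a ∈ S.Rp, (S.kap a * a i) • dQuot a (fun y => y j • f y) x
      = ∑ a ∈ S.Rp, (x j • ((S.kap a * a i) • dQuot a f x)
          + ((S.kap a * a i) * ((2 * a j)/⟪a,a⟫)) • f (reflect a x)) := by
    refine Finset.sum_congr rfl fun a _ => ?_
    rw [dQuot_coord_smul a hf j, smul_add, smul_smul, smul_smul, smul_smul, mul_comm (S.kap a * a i) (x j)]
  rw [hsum, Finset.sum_add_distrib, ← Finset.smul_sum, smul_add]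
  abel

lemma sum_coord_smul_dunklT (S : DunklData d) {f : Vd d → A} {x : Vd d}
    (hf : DifferentiableAt ℝ f x) :
    ∑ i, x i • dunklT S i f x
      = fderiv ℝ f x x + ∑ a ∈ S.Rp, S.kap a • (f x - f (reflect a x)) := by
  unfold dunklT
  have split : ∑ i, x i • ((fderiv ℝ f x) (EuclideanSpace.single i 1)
        + ∑ a ∈ S.Rp, (S.kap a * a i) • dQuot a f x)
      = (∑ i, x i • (fderiv ℝ f x) (EuclideanSpace.single i 1))
        + ∑ i, x i • ∑ a ∈ S.Rp, (S.kap a * a i) • dQuot a f x := by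
    rw [← Finset.sum_add_distrib]
    exact Finset.sum_congr rfl fun i _ => smul_add _ _ _
  rw [split]
  congr 1
  · have h0 : ∀ i : Fin d, x i • (fderiv ℝ f x) (EuclideanSpace.single i 1)
        = (fderiv ℝ f x) (x i • EuclideanSpace.single i 1) := fun i =>
      ((fderiv ℝ f x).map_smul _ _).symm
    rw [Finset.sum_congr rfl fun i _ => h0 i, ← map_sum, sum_coord_single]
  · have h1 : ∀ i : Fin d, x i • ∑ a ∈ S.Rp, (S.kap a * a i) • dQuot a f x
        = ∑ a ∈ S.Rp, (x i * (S.kap a * a i)) • dQuot a f x := by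
      intro i
      rw [Finset.smul_sum]
      exact Finset.sum_congr rfl fun a _ => smul_smul _ _ _
    rw [Finset.sum_congr rfl fun i _ => h1 i, Finset.sum_comm]
    refine Finset.sum_congr rfl fun a _ => ?_
    rw [← Finset.sum_smul]
    have h2 : ∑ i, x i * (S.kap a * a i) = S.kap a * ⟪a,x⟫ := by
      rw [inner_eq_sum, Finset.mul_sum]
      exact Finset.sum_congr rfl fun i _ => by ring
    rw [h2, mul_smul, inner_smul_dQuot]

lemma diracD_vec_mul (e : Fin d → A)
    (he : ∀ i j, e i * e j + e j * e i = if i = j then (-2 : A) else 0)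
    (S : DunklData d) (hRp : ∀ a ∈ S.Rp, ⟪a,a⟫ ≠ (0:ℝ))
    {f : Vd d → A} (hf : Differentiable ℝ f) (x : Vd d) :
    diracD e S (fun y => vecC e y * f y) x
      = (-(dunklDim S)) • f x - (2:ℝ) • fderiv ℝ f x x - vecC e x * diracD e S f x := by
  have hgdiff : ∀ j : Fin d, DifferentiableAt ℝ (fun y => e j * f y) x :=
    fun j => (hf x).const_mul (e j)
  have hjdiff : ∀ j ∈ (Finset.univ : Finset (Fin d)),
      DifferentiableAt ℝ (fun y => y j • (e j * f y)) x :=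
    fun j _ => (hasFDerivAt_coord_smul (hgdiff j) j).differentiableAt
  have hF : (fun y => vecC e y * f y) = fun y => ∑ j, y j • (e j * f y) := by
    funext y
    rw [vecC, Finset.sum_mul]
    exact Finset.sum_congr rfl fun j _ => smul_mul_assoc _ _ _
  rw [show diracD e S (fun y => vecC e y * f y) x
      = ∑ i, e i * dunklT S i (fun y => vecC e y * f y) x from rfl, hF]
  have step1 : ∀ i : Fin d, dunklT S i (fun y => ∑ j, y j • (e j * f y)) x
      = ∑ j, ((if j = i then (1:ℝ) else 0) • (e j * f x)
          + x j • (e j * dunklT S i f x)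
          + ∑ a ∈ S.Rp, ((S.kap a * a i) * ((2 * a j)/⟪a,a⟫)) • (e j * f (reflect a x))) := by
    intro i
    rw [dunklT_sum Finset.univ S i _ hjdiff]
    refine Finset.sum_congr rfl fun j _ => ?_
    rw [dunklT_coord_smul S i (hgdiff j) j, dunklT_const_mul S i (e j) (hf x)]
  rw [Finset.sum_congr rfl fun i _ => by rw [step1 i]]
  -- distribute e i * over the j-sum and split into three double sums
  have step2 : ∀ i : Fin d, e i * (∑ j, ((if j = i then (1:ℝ) else 0) • (e j * f x)
          + x j • (e j * dunklT S i f x)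
          + ∑ a ∈ S.Rp, ((S.kap a * a i) * ((2 * a j)/⟪a,a⟫)) • (e j * f (reflect a x))))
      = (∑ j, (if j = i then (1:ℝ) else 0) • (e i * (e j * f x)))
        + (∑ j, x j • (e i * (e j * dunklT S i f x)))
        + ∑ j, ∑ a ∈ S.Rp, ((S.kap a * a i) * ((2 * a j)/⟪a,a⟫)) • (e i * (e j * f (reflect a x))) := by
    intro i
    rw [Finset.mul_sum, ← Finset.sum_add_distrib, ← Finset.sum_add_distrib]
    refine Finset.sum_congr rfl fun j _ => ?_
    rw [mul_add, mul_add, mul_smul_comm, mul_smul_comm, Finset.mul_sum]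
    congr 1
    exact Finset.sum_congr rfl fun a _ => mul_smul_comm _ _ _
  rw [Finset.sum_congr rfl fun i _ => step2 i, Finset.sum_add_distrib, Finset.sum_add_distrib]
  -- S1
  have hS1 : ∑ i, ∑ j, (if j = i then (1:ℝ) else 0) • (e i * (e j * f x))
      = -((d:ℝ) • f x) := by
    have inner1 : ∀ i : Fin d, ∑ j, (if j = i then (1:ℝ) else 0) • (e i * (e j * f x))
        = e i * (e i * f x) := by
      intro i
      have h' : ∀ j : Fin d, (if j = i then (1:ℝ) else 0) • (e i * (e j * f x))
          = if j = i then e i * (e j * f x) else 0 := by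
        intro j; split <;> simp
      rw [Finset.sum_congr rfl fun j _ => h' j, Finset.sum_ite_eq' Finset.univ i,
        if_pos (Finset.mem_univ i)]
    have sq : ∀ i : Fin d, e i * (e i * f x) = -(f x) := by
      intro i; rw [← mul_assoc, gen_sq e he i, neg_one_mul]
    rw [Finset.sum_congr rfl fun i _ => inner1 i, Finset.sum_congr rfl fun i _ => sq i,
      Finset.sum_const, Finset.card_univ, Fintype.card_fin, ← Nat.cast_smul_eq_nsmul ℝ,
      smul_neg]
  -- S2
  have hee : ∀ (i j : Fin d) (T : A),
      e i * (e j * T) = (if i = j then (-2:A) else 0) * T - e j * (e i * T) := by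
    intro i j T
    have h' : e i * e j = (if i = j then (-2:A) else 0) - e j * e i := by
      rw [eq_sub_iff_add_eq]; exact he i j
    rw [← mul_assoc, h', sub_mul, mul_assoc]
  have hS2 : ∑ i, ∑ j, x j • (e i * (e j * dunklT S i f x))
      = ((-2:ℝ) • (fderiv ℝ f x x + ∑ a ∈ S.Rp, S.kap a • (f x - f (reflect a x))))
        - vecC e x * diracD e S f x := by
    have split2 : ∀ i : Fin d, ∑ j, x j • (e i * (e j * dunklT S i f x))
        = (∑ j, x j • ((if i = j then (-2:A) else 0) * dunklT S i f x))
          - ∑ j, x j • (e j * (e i * dunklT S i f x)) := by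
      intro i
      rw [← Finset.sum_sub_distrib]
      refine Finset.sum_congr rfl fun j _ => ?_
      rw [hee i j, smul_sub]
    rw [Finset.sum_congr rfl fun i _ => split2 i, Finset.sum_sub_distrib]
    congr 1
    · -- part A
      have innerA : ∀ i : Fin d, ∑ j, x j • ((if i = j then (-2:A) else 0) * dunklT S i f x)
          = (-2:ℝ) • (x i • dunklT S i f x) := by
        intro i
        have h' : ∀ j : Fin d, x j • ((if i = j then (-2:A) else 0) * dunklT S i f x)
            = if i = j then x j • ((-2:A) * dunklT S i f x) else 0 := by
          intro j; split <;> simp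
        rw [Finset.sum_congr rfl fun j _ => h' j, Finset.sum_ite_eq Finset.univ i,
          if_pos (Finset.mem_univ i), ← neg_two_smul_one, smul_mul_assoc, one_mul,
          smul_comm]
      rw [Finset.sum_congr rfl fun i _ => innerA i, ← Finset.smul_sum,
        sum_coord_smul_dunklT S (hf x)]
    · -- part B
      rw [Finset.sum_comm]
      have innerB : ∀ j : Fin d, ∑ i, x j • (e j * (e i * dunklT S i f x))
          = x j • (e j * diracD e S f x) := by
        intro j
        rw [← Finset.smul_sum, ← Finset.mul_sum]
        rfl
      rw [Finset.sum_congr rfl fun j _ => innerB j]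
      have : ∀ j : Fin d, x j • (e j * diracD e S f x)
          = (x j • e j) * diracD e S f x := fun j => (smul_mul_assoc _ _ _).symm
      rw [Finset.sum_congr rfl fun j _ => this j, ← Finset.sum_mul]
      rfl
  -- S3
  have hS3 : ∑ i, ∑ j, ∑ a ∈ S.Rp,
        ((S.kap a * a i) * ((2 * a j)/⟪a,a⟫)) • (e i * (e j * f (reflect a x)))
      = ∑ a ∈ S.Rp, (-(2 * S.kap a)) • f (reflect a x) := by
    rw [Finset.sum_congr rfl fun i (_ : i ∈ Finset.univ) => Finset.sum_comm, Finset.sum_comm]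
    refine Finset.sum_congr rfl fun a ha => ?_
    have hN := hRp a ha
    have coeff : ∀ i j : Fin d, (S.kap a * a i) * ((2 * a j)/⟪a,a⟫)
        = (2 * S.kap a/⟪a,a⟫) * (a i * a j) := by
      intro i j; ring
    have pull : ∑ i, ∑ j, ((S.kap a * a i) * ((2 * a j)/⟪a,a⟫)) • (e i * (e j * f (reflect a x)))
        = (2 * S.kap a/⟪a,a⟫) • ∑ i, ∑ j, (a i * a j) • (e i * (e j * f (reflect a x))) := by
      rw [Finset.smul_sum]
      refine Finset.sum_congr rfl fun i _ => ?_
      rw [Finset.smul_sum]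
      refine Finset.sum_congr rfl fun j _ => ?_
      rw [coeff i j, mul_smul]
    have expand : vecC e a * (vecC e a * f (reflect a x))
        = ∑ i, ∑ j, (a i * a j) • (e i * (e j * f (reflect a x))) := by
      have h1 : vecC e a * (vecC e a * f (reflect a x))
          = ∑ i, a i • (e i * (vecC e a * f (reflect a x))) := by
        rw [vecC, Finset.sum_mul]
        exact Finset.sum_congr rfl fun i _ => smul_mul_assoc _ _ _
      have h2 : ∀ i : Fin d, e i * (vecC e a * f (reflect a x))
          = ∑ j, a j • (e i * (e j * f (reflect a x))) := by
        intro i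
        rw [vecC, Finset.sum_mul, Finset.mul_sum]
        refine Finset.sum_congr rfl fun j _ => ?_
        rw [smul_mul_assoc, mul_smul_comm]
      rw [h1, Finset.sum_congr rfl fun i _ => by rw [h2 i, Finset.smul_sum]]
      refine Finset.sum_congr rfl fun i _ => Finset.sum_congr rfl fun j _ => ?_
      rw [smul_smul]
    have vsq : vecC e a * (vecC e a * f (reflect a x))
        = (-⟪a,a⟫ : ℝ) • f (reflect a x) := by
      rw [← mul_assoc, vec_sq e he a, smul_mul_assoc, one_mul]
    rw [pull, ← expand, vsq, smul_smul]
    congr 1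
    rw [inner_eq_sum a a] at hN ⊢
    field_simp
    rw [mul_div_assoc, div_self (by simpa [sq] using hN), mul_one]
  rw [hS1, hS2, hS3]
  have hsplit : ∑ a ∈ S.Rp, S.kap a • (f x - f (reflect a x))
      = gam S • f x - ∑ a ∈ S.Rp, S.kap a • f (reflect a x) := by
    rw [Finset.sum_congr rfl fun a _ => smul_sub (S.kap a) (f x) (f (reflect a x)),
      Finset.sum_sub_distrib, ← Finset.sum_smul]
    rfl
  have hlast : ∑ a ∈ S.Rp, (-(2 * S.kap a)) • f (reflect a x)
      = (-2:ℝ) • ∑ a ∈ S.Rp, S.kap a • f (reflect a x) := by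
    rw [Finset.smul_sum]
    refine Finset.sum_congr rfl fun a _ => ?_
    rw [smul_smul]
    congr 1
    ring
  rw [hsplit, hlast, dunklDim]
  module

lemma euler_fderiv {m : ℕ} {f : Vd d → A} {x : Vd d} (hfx : DifferentiableAt ℝ f x)
    (hhom : ∀ (c : ℝ) (y : Vd d), f (c • y) = c ^ m • f y) :
    fderiv ℝ f x x = (m : ℝ) • f x := by
  have hs : HasDerivAt (fun c : ℝ => c • x) x 1 := by
    simpa using (hasDerivAt_id (1:ℝ)).smul_const x
  have hfd : HasFDerivAt f (fderiv ℝ f x) ((fun c : ℝ => c • x) 1) := by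
    simpa [one_smul] using hfx.hasFDerivAt
  have h1 : HasDerivAt (fun c : ℝ => f (c • x)) ((fderiv ℝ f x) x) 1 := by
    simpa [Function.comp_def] using HasFDerivAt.comp_hasDerivAt 1 hfd hs
  have h2 : HasDerivAt (fun c : ℝ => f (c • x)) ((m:ℝ) • f x) 1 := by
    have heq : (fun c : ℝ => f (c • x)) = fun c : ℝ => c ^ m • f x :=
      funext fun c => hhom c x
    rw [heq]
    simpa using (hasDerivAt_pow m (1:ℝ)).smul_const (f x)
  exact h1.unique h2

/-- Lemma 2.1: for a homogeneous Dunkl-monogenic polynomial `P_n` of degree `n`,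
`D̲(x̲^k P_n) = −k x̲^{k−1} P_n` for even `k`, and
`D̲(x̲^k P_n) = −(k + μ + 2n − 1) x̲^{k−1} P_n` for odd `k`. -/
theorem diracD_vec_pow_mul (d : ℕ) (A : Type*) [NormedRing A] [NormedAlgebra ℝ A]
    (e : Fin d → A) (he : CliffordRel e) (S : DunklData d) (hγ : 0 < gam S)
    (k n : ℕ) (P : Vd d → A) (hP : ContDiff ℝ (⊤ : ℕ∞) P)
    (hhom : ∀ (c : ℝ) (x : Vd d), P (c • x) = (c ^ n) • P x)
    (hmono : ∀ x : Vd d, diracD e S P x = 0) :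
    ∀ x : Vd d,
      diracD e S (fun y => vecC e y ^ k * P y) x
        = (if Even k then -(k : ℝ)
            else -((k : ℝ) + dunklDim S + 2 * n - 1)) • (vecC e x ^ (k - 1) * P x) := by
  have hRp : ∀ a ∈ S.Rp, ⟪a,a⟫ ≠ (0:ℝ) := by
    intro a ha h0
    have h1 : a = 0 := inner_self_eq_zero.mp h0
    exact S.zero_not_mem (h1 ▸ S.Rp_subset ha)
  have hPdiff : Differentiable ℝ P := hP.differentiable (by simp)
  induction k with
  | zero =>
    intro x
    rw [if_pos Even.zero]
    simp only [pow_zero, one_mul, Nat.cast_zero, neg_zero, zero_smul]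
    exact hmono x
  | succ k ih =>
    intro x
    have hfk : Differentiable ℝ (fun y => vecC e y ^ k * P y) :=
      (diff_vecC_pow e k).mul hPdiff
    have hkhom : ∀ (c : ℝ) (y : Vd d),
        (fun y => vecC e y ^ k * P y) (c • y)
          = c ^ (k + n) • (fun y => vecC e y ^ k * P y) y := by
      intro c y
      simp only
      rw [vecC_smul, smul_pow, hhom, smul_mul_assoc, mul_smul_comm, smul_smul, ← pow_add]
    have heuler : fderiv ℝ (fun y => vecC e y ^ k * P y) x x
        = ((k + n : ℕ) : ℝ) • (vecC e x ^ k * P x) := euler_fderiv (hfk x) hkhom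
    have hstep : diracD e S (fun y => vecC e y ^ (k+1) * P y) x
        = diracD e S (fun y => vecC e y * (vecC e y ^ k * P y)) x := by
      congr 1
      funext y
      rw [pow_succ', mul_assoc]
    rw [hstep, diracD_vec_mul e he.1 S hRp hfk x, heuler, ih x, Nat.add_sub_cancel]
    rcases Nat.even_or_odd k with hk | hk
    · rw [if_pos hk, if_neg (by simp [Nat.even_add_one, hk])]
      have hmul : vecC e x * ((-(k:ℝ)) • (vecC e x ^ (k-1) * P x))
          = (-(k:ℝ)) • (vecC e x ^ k * P x) := by
        cases k with
        | zero => simp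
        | succ m => rw [mul_smul_comm, Nat.succ_sub_one, ← mul_assoc, ← pow_succ']
      rw [hmul]
      match_scalars
      push_cast
      ring
    · have hk' : ¬ Even k := Nat.not_even_iff_odd.mpr hk
      rw [if_neg hk', if_pos (by simp [Nat.even_add_one, hk'])]
      have hmul : vecC e x * ((-((k:ℝ) + dunklDim S + 2 * n - 1)) • (vecC e x ^ (k-1) * P x))
          = (-((k:ℝ) + dunklDim S + 2 * n - 1)) • (vecC e x ^ k * P x) := by
        cases k with
        | zero => exact absurd hk (by simp)
        | succ m => rw [mul_smul_comm, Nat.succ_sub_one, ← mul_assoc, ← pow_succ']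
      rw [hmul]
      match_scalars
      push_cast
      ring
end
end

section
/- Let u, v be scalar-valued smooth functions on an open set Ω ⊂ {(t,s) ∈ ℝ² : s > 0} satisfying ∂_t Δ_z^m u − ∂_s Δ_z^m v = 0 and ∂_t Δ_z^m v + ∂_s Δ_z^m u = 0 on Ω (i.e. f = u + iv satisfies ∂_z̄ Δ_z^m f = 0). Let μ be odd and n ∈ ℕ, and set A = D_r(n+(μ−1)/2){Δ_z^m u} and B = D^r(n+(μ−1)/2){Δ_z^m v}, regarded as functions of (x₀,r) (replacing t by x₀ and s by r). Then A and B satisfy the Vekua-type system ∂_{x₀}A − ∂_r B = ((2n+μ−1)/r) B and ∂_{x₀}B + ∂_r A = 0 on the corresponding domain. -/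
noncomputable section

/-- Partial derivative in the first variable (`x₀`, resp. `t`) of a function on `ℝ²`. -/
def pt1 (g : ℝ × ℝ → ℝ) (p : ℝ × ℝ) : ℝ := fderiv ℝ g p (1, 0)

/-- The two-dimensional Laplacian `Δ_z = ∂_{x₀}² + ∂_r²` on functions on `ℝ²`. -/
def lap2 (g : ℝ × ℝ → ℝ) : ℝ × ℝ → ℝ := fun p => pt1 (pt1 g) p + pr2 (pr2 g) p

section helpers
variable {Ω : Set (ℝ × ℝ)} {f g : ℝ × ℝ → ℝ} {p : ℝ × ℝ}

lemma pr2_congr_s12 (hΩ : IsOpen Ω) (hp : p ∈ Ω) (h : ∀ q ∈ Ω, f q = g q) :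
    pr2 f p = pr2 g p := by
  unfold pr2
  rw [Filter.EventuallyEq.fderiv_eq
    (by filter_upwards [hΩ.mem_nhds hp] with q hq using h q hq)]

lemma pt1_congr (hΩ : IsOpen Ω) (hp : p ∈ Ω) (h : ∀ q ∈ Ω, f q = g q) :
    pt1 f p = pt1 g p := by
  unfold pt1
  rw [Filter.EventuallyEq.fderiv_eq
    (by filter_upwards [hΩ.mem_nhds hp] with q hq using h q hq)]

lemma contDiffOn_pr2 (hΩ : IsOpen Ω) (hf : ContDiffOn ℝ (⊤ : ℕ∞) f Ω) :
    ContDiffOn ℝ (⊤ : ℕ∞) (pr2 f) Ω := by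
  have h := hf.fderiv_of_isOpen hΩ (m := (⊤ : ℕ∞)) (by exact_mod_cast le_top)
  exact h.clm_apply contDiffOn_const

lemma contDiffOn_pt1 (hΩ : IsOpen Ω) (hf : ContDiffOn ℝ (⊤ : ℕ∞) f Ω) :
    ContDiffOn ℝ (⊤ : ℕ∞) (pt1 f) Ω := by
  have h := hf.fderiv_of_isOpen hΩ (m := (⊤ : ℕ∞)) (by exact_mod_cast le_top)
  exact h.clm_apply contDiffOn_const

lemma diffAt_of_smooth (hΩ : IsOpen Ω) (hf : ContDiffOn ℝ (⊤ : ℕ∞) f Ω) (hp : p ∈ Ω) :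
    DifferentiableAt ℝ f p :=
  (hf.contDiffAt (hΩ.mem_nhds hp)).differentiableAt (by simp)

lemma pt1_pr2_comm (hΩ : IsOpen Ω) (hf : ContDiffOn ℝ (⊤ : ℕ∞) f Ω) (hp : p ∈ Ω) :
    pt1 (pr2 f) p = pr2 (pt1 f) p := by
  have hfa : ContDiffAt ℝ (⊤ : ℕ∞) f p := hf.contDiffAt (hΩ.mem_nhds hp)
  have hd : DifferentiableAt ℝ (fderiv ℝ f) p := by
    have := hfa.fderiv_right (m := (1 : ℕ∞)) (by exact_mod_cast le_top)
    exact this.differentiableAt (by simp)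
  have hsymm := hfa.isSymmSndFDerivAt (by rw [minSmoothness_of_isRCLikeNormedField]; exact WithTop.coe_le_coe.mpr (le_top : (2 : ℕ∞) ≤ ⊤))
  unfold pt1 pr2
  rw [fderiv_clm_apply hd (differentiableAt_const _),
      fderiv_clm_apply hd (differentiableAt_const _)]
  simp [hsymm (1,0) (0,1)]

lemma pr2_add (hf : DifferentiableAt ℝ f p) (hg : DifferentiableAt ℝ g p) :
    pr2 (fun q => f q + g q) p = pr2 f p + pr2 g p := by
  unfold pr2; rw [fderiv_fun_add hf hg]; simp

lemma pr2_mul (hf : DifferentiableAt ℝ f p) (hg : DifferentiableAt ℝ g p) :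
    pr2 (fun q => f q * g q) p = pr2 f p * g p + f p * pr2 g p := by
  unfold pr2; rw [fderiv_fun_mul hf hg]; simp; ring

lemma pt1_mul (hf : DifferentiableAt ℝ f p) (hg : DifferentiableAt ℝ g p) :
    pt1 (fun q => f q * g q) p = pt1 f p * g p + f p * pt1 g p := by
  unfold pt1; rw [fderiv_fun_mul hf hg]; simp; ring

lemma pr2_neg : pr2 (fun q => -f q) p = -pr2 f p := by
  unfold pr2; rw [fderiv_fun_neg]; simp

lemma hasFDerivAt_inv2 (hp : p.2 ≠ 0) :
    HasFDerivAt (fun q : ℝ × ℝ => (q.2)⁻¹)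
      ((-(p.2 ^ 2)⁻¹) • ContinuousLinearMap.snd ℝ ℝ ℝ) p :=
  (hasDerivAt_inv hp).comp_hasFDerivAt p hasFDerivAt_snd

lemma diffAt_inv2 (hp : p.2 ≠ 0) :
    DifferentiableAt ℝ (fun q : ℝ × ℝ => (q.2)⁻¹) p :=
  (hasFDerivAt_inv2 hp).differentiableAt

lemma pr2_inv2 (hp : p.2 ≠ 0) : pr2 (fun q : ℝ × ℝ => (q.2)⁻¹) p = -(p.2 ^ 2)⁻¹ := by
  unfold pr2; rw [(hasFDerivAt_inv2 hp).fderiv]; simp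

lemma pt1_inv2 (hp : p.2 ≠ 0) : pt1 (fun q : ℝ × ℝ => (q.2)⁻¹) p = 0 := by
  unfold pt1; rw [(hasFDerivAt_inv2 hp).fderiv]; simp

lemma contDiffOn_inv2 (hΩpos : Ω ⊆ {p : ℝ × ℝ | 0 < p.2}) :
    ContDiffOn ℝ (⊤ : ℕ∞) (fun q : ℝ × ℝ => (q.2)⁻¹) Ω :=
  (contDiff_snd.contDiffOn).inv (fun q hq => (hΩpos hq).ne')

lemma contDiffOn_DrOp (hΩ : IsOpen Ω) (hΩpos : Ω ⊆ {p : ℝ × ℝ | 0 < p.2})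
    (hf : ContDiffOn ℝ (⊤ : ℕ∞) f Ω) (k : ℕ) :
    ContDiffOn ℝ (⊤ : ℕ∞) (DrOp k f) Ω := by
  induction k with
  | zero => exact hf
  | succ k ih =>
    show ContDiffOn ℝ (⊤ : ℕ∞) (fun p => (1 / p.2) * pr2 (DrOp k f) p) Ω
    have h1 : ContDiffOn ℝ (⊤ : ℕ∞) (fun p : ℝ × ℝ => 1 / p.2) Ω := by
      simpa [one_div] using contDiffOn_inv2 hΩpos
    exact h1.mul (contDiffOn_pr2 hΩ ih)

lemma contDiffOn_DRop (hΩ : IsOpen Ω) (hΩpos : Ω ⊆ {p : ℝ × ℝ | 0 < p.2})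
    (hf : ContDiffOn ℝ (⊤ : ℕ∞) f Ω) (k : ℕ) :
    ContDiffOn ℝ (⊤ : ℕ∞) (DRop k f) Ω := by
  induction k with
  | zero => exact hf
  | succ k ih =>
    show ContDiffOn ℝ (⊤ : ℕ∞) (pr2 (fun q => DRop k f q / q.2)) Ω
    exact contDiffOn_pr2 hΩ (ih.div (contDiff_snd.contDiffOn) (fun q hq => (hΩpos hq).ne'))

lemma contDiffOn_lap2 (hΩ : IsOpen Ω) (hf : ContDiffOn ℝ (⊤ : ℕ∞) f Ω) :
    ContDiffOn ℝ (⊤ : ℕ∞) (lap2 f) Ω :=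
  (contDiffOn_pt1 hΩ (contDiffOn_pt1 hΩ hf)).add (contDiffOn_pr2 hΩ (contDiffOn_pr2 hΩ hf))

lemma contDiffOn_lap2_iter (hΩ : IsOpen Ω) (hf : ContDiffOn ℝ (⊤ : ℕ∞) f Ω) (m : ℕ) :
    ContDiffOn ℝ (⊤ : ℕ∞) (lap2^[m] f) Ω := by
  induction m with
  | zero => exact hf
  | succ m ih => rw [Function.iterate_succ_apply']; exact contDiffOn_lap2 hΩ ih

/-- The main induction: the Vekua system propagates through the operators. -/
lemma vekua_induction (hΩ : IsOpen Ω) (hΩpos : Ω ⊆ {p : ℝ × ℝ | 0 < p.2})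
    (U V : ℝ × ℝ → ℝ)
    (hU : ContDiffOn ℝ (⊤ : ℕ∞) U Ω) (hV : ContDiffOn ℝ (⊤ : ℕ∞) V Ω)
    (hCR : ∀ p ∈ Ω, pt1 U p - pr2 V p = 0 ∧ pt1 V p + pr2 U p = 0) (k : ℕ) :
    ∀ p ∈ Ω, pt1 (DrOp k U) p - pr2 (DRop k V) p = (2 * (k : ℝ) / p.2) * DRop k V p
      ∧ pt1 (DRop k V) p + pr2 (DrOp k U) p = 0 := by
  induction k with
  | zero =>
    intro p hp
    refine ⟨?_, (hCR p hp).2⟩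
    simpa [DrOp, DRop] using (hCR p hp).1
  | succ k ih =>
    intro p hp
    -- notation
    set A := DrOp k U with hA
    set B := DRop k V with hB
    have hSA : ContDiffOn ℝ (⊤ : ℕ∞) A Ω := contDiffOn_DrOp hΩ hΩpos hU k
    have hSB : ContDiffOn ℝ (⊤ : ℕ∞) B Ω := contDiffOn_DRop hΩ hΩpos hV k
    have hSpA : ContDiffOn ℝ (⊤ : ℕ∞) (pr2 A) Ω := contDiffOn_pr2 hΩ hSA
    have hSpB : ContDiffOn ℝ (⊤ : ℕ∞) (pr2 B) Ω := contDiffOn_pr2 hΩ hSB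
    have hr : ∀ q ∈ Ω, (q.2 : ℝ) ≠ 0 := fun q hq => (hΩpos hq).ne'
    have hrp : p.2 ≠ 0 := hr p hp
    -- C = B / r, as a product with inv
    have hSC : ContDiffOn ℝ (⊤ : ℕ∞) (fun q => B q / q.2) Ω :=
      hSB.div (contDiff_snd.contDiffOn) hr
    -- the new functions
    have hA' : DrOp (k+1) U = fun q => (1 / q.2) * pr2 A q := rfl
    have hB' : DRop (k+1) V = fun q => pr2 (fun q' => B q' / q'.2) q := rfl
    -- pointwise value of pr2 (B/r) on Ω
    have hprC : ∀ q ∈ Ω, pr2 (fun q' => B q' / q'.2) q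
        = pr2 B q * (q.2)⁻¹ + B q * (-((q.2)^2)⁻¹) := by
      intro q hq
      have : pr2 (fun q' => B q' / q'.2) q = pr2 (fun q' => B q' * (q'.2)⁻¹) q := by
        simp [div_eq_mul_inv]
      rw [this, pr2_mul (diffAt_of_smooth hΩ hSB hq) (diffAt_inv2 (hr q hq)),
        pr2_inv2 (hr q hq)]
    -- first equation
    have e1 : pt1 (DrOp (k+1) U) p - pr2 (DRop (k+1) V) p
        = (2 * ((k:ℝ)+1) / p.2) * DRop (k+1) V p := by
      -- pt1 of A'
      have ht1 : pt1 (DrOp (k+1) U) p = (p.2)⁻¹ * pt1 (pr2 A) p := by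
        rw [hA']
        have : pt1 (fun q => (1 / q.2) * pr2 A q) p
            = pt1 (fun q => (q.2)⁻¹ * pr2 A q) p := by simp [one_div]
        rw [this, pt1_mul (diffAt_inv2 hrp) (diffAt_of_smooth hΩ hSpA hp),
          pt1_inv2 hrp]
        ring
      -- commute and use induction hypothesis
      have hcomm : pt1 (pr2 A) p = pr2 (pt1 A) p := pt1_pr2_comm hΩ hSA hp
      have hIH1 : ∀ q ∈ Ω, pt1 A q = pr2 B q + (2 * (k:ℝ)) * ((q.2)⁻¹ * B q) := by
        intro q hq
        have := (ih q hq).1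
        have h2 : pt1 A q = 2 * (k:ℝ) / q.2 * B q + pr2 B q := by linarith
        rw [h2]; field_simp; ring
      have hpt1A : pr2 (pt1 A) p
          = pr2 (fun q => pr2 B q + (2 * (k:ℝ)) * ((q.2)⁻¹ * B q)) p :=
        pr2_congr_s12 hΩ hp hIH1
      have hdiffinvB : DifferentiableAt ℝ (fun q : ℝ × ℝ => (q.2)⁻¹ * B q) p :=
        (diffAt_inv2 hrp).mul (diffAt_of_smooth hΩ hSB hp)
      have hexp1 : pr2 (fun q => pr2 B q + (2 * (k:ℝ)) * ((q.2)⁻¹ * B q)) p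
          = pr2 (pr2 B) p + (2 * (k:ℝ)) *
              (-((p.2)^2)⁻¹ * B p + (p.2)⁻¹ * pr2 B p) := by
        rw [pr2_add (diffAt_of_smooth hΩ hSpB hp)
          ((differentiableAt_const _).fun_mul hdiffinvB)]
        congr 1
        have : pr2 (fun q => (2 * (k:ℝ)) * ((q.2)⁻¹ * B q)) p
            = (2 * (k:ℝ)) * pr2 (fun q : ℝ × ℝ => (q.2)⁻¹ * B q) p := by
          unfold pr2; rw [fderiv_const_mul hdiffinvB]; simp
        rw [this, pr2_mul (diffAt_inv2 hrp) (diffAt_of_smooth hΩ hSB hp),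
          pr2_inv2 hrp]
      -- pr2 of B'
      have hpr2B' : pr2 (DRop (k+1) V) p
          = pr2 (pr2 B) p * (p.2)⁻¹ - pr2 B p * ((p.2)^2)⁻¹
            - (pr2 B p * ((p.2)^2)⁻¹ - B p * (2 * ((p.2)^3)⁻¹)) := by
        rw [hB']
        have h1 : pr2 (pr2 (fun q' => B q' / q'.2)) p
            = pr2 (fun q => pr2 B q * (q.2)⁻¹ + B q * (-((q.2)^2)⁻¹)) p :=
          pr2_congr_s12 hΩ hp hprC
        have hd1 : DifferentiableAt ℝ (fun q : ℝ × ℝ => pr2 B q * (q.2)⁻¹) p :=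
          (diffAt_of_smooth hΩ hSpB hp).mul (diffAt_inv2 hrp)
        have hd2 : DifferentiableAt ℝ (fun q : ℝ × ℝ => B q * (-((q.2)^2)⁻¹)) p := by
          have : DifferentiableAt ℝ (fun q : ℝ × ℝ => ((q.2)^2)⁻¹) p := by
            have := (diffAt_inv2 hrp).fun_mul (diffAt_inv2 hrp)
            refine this.congr_of_eventuallyEq ?_
            filter_upwards with q
            rw [sq, mul_inv]
          exact (diffAt_of_smooth hΩ hSB hp).mul this.neg
        show pr2 (pr2 (fun q' => B q' / q'.2)) p = _
        rw [h1, pr2_add hd1 hd2,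
          pr2_mul (diffAt_of_smooth hΩ hSpB hp) (diffAt_inv2 hrp), pr2_inv2 hrp]
        have hsq : pr2 (fun q : ℝ × ℝ => -((q.2)^2)⁻¹) p = 2 * ((p.2)^3)⁻¹ := by
          have heq : pr2 (fun q : ℝ × ℝ => -((q.2)^2)⁻¹) p
              = pr2 (fun q : ℝ × ℝ => -((q.2)⁻¹ * (q.2)⁻¹)) p := by
            congr 1; funext q; rw [sq, mul_inv]
          rw [heq, pr2_neg, pr2_mul (diffAt_inv2 hrp) (diffAt_inv2 hrp), pr2_inv2 hrp]
          field_simp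
          ring
        rw [pr2_mul (diffAt_of_smooth hΩ hSB hp)
          (by
            have : DifferentiableAt ℝ (fun q : ℝ × ℝ => ((q.2)^2)⁻¹) p := by
              have := (diffAt_inv2 hrp).fun_mul (diffAt_inv2 hrp)
              refine this.congr_of_eventuallyEq ?_
              filter_upwards with q
              rw [sq, mul_inv]
            exact this.neg), hsq]
        ring
      -- value of B' at p
      have hBval : DRop (k+1) V p = pr2 B p * (p.2)⁻¹ + B p * (-((p.2)^2)⁻¹) := by
        rw [hB']; exact hprC p hp
      rw [ht1, hcomm, hpt1A, hexp1, hpr2B', hBval]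
      field_simp
      ring
    -- second equation
    have e2 : pt1 (DRop (k+1) V) p + pr2 (DrOp (k+1) U) p = 0 := by
      -- pt1 B' = pt1 (pr2 C) = pr2 (pt1 C), pt1 C = pt1 B / r = -pr2 A / r on Ω
      have hcommC : pt1 (pr2 (fun q => B q / q.2)) p
          = pr2 (pt1 (fun q => B q / q.2)) p := pt1_pr2_comm hΩ hSC hp
      have hpt1C : ∀ q ∈ Ω, pt1 (fun q' => B q' / q'.2) q
          = -((q.2)⁻¹ * pr2 A q) := by
        intro q hq
        have h1 : pt1 (fun q' => B q' / q'.2) q = pt1 (fun q' => B q' * (q'.2)⁻¹) q := by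
          simp [div_eq_mul_inv]
        rw [h1, pt1_mul (diffAt_of_smooth hΩ hSB hq) (diffAt_inv2 (hr q hq)),
          pt1_inv2 (hr q hq)]
        have := (ih q hq).2
        have h2 : pt1 B q = -pr2 A q := by linarith
        rw [h2]; ring
      have hpt1B' : pt1 (DRop (k+1) V) p
          = -(pr2 (fun q : ℝ × ℝ => (q.2)⁻¹ * pr2 A q) p) := by
        rw [hB']
        show pt1 (pr2 (fun q => B q / q.2)) p = _
        rw [hcommC, pr2_congr_s12 hΩ hp hpt1C]
        have : pr2 (fun q : ℝ × ℝ => -((q.2)⁻¹ * pr2 A q)) p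
            = -(pr2 (fun q : ℝ × ℝ => (q.2)⁻¹ * pr2 A q) p) := pr2_neg
        exact this
      have hpr2A' : pr2 (DrOp (k+1) U) p
          = pr2 (fun q : ℝ × ℝ => (q.2)⁻¹ * pr2 A q) p := by
        rw [hA']
        congr 1; funext q; rw [one_div]
      rw [hpt1B', hpr2A']; ring
    refine ⟨?_, e2⟩
    have : (2 * ((k:ℝ)+1)) = 2 * ((k:ℕ)+1 : ℕ) := by push_cast; ring
    calc pt1 (DrOp (k+1) U) p - pr2 (DRop (k+1) V) p
        = (2 * ((k:ℝ)+1) / p.2) * DRop (k+1) V p := e1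
      _ = (2 * ((k+1 : ℕ) : ℝ) / p.2) * DRop (k+1) V p := by push_cast; ring_nf

end helpers

/-- The Vekua-type system satisfied by `A = D_r(n+(μ−1)/2){Δ_z^m u}` and
`B = D^r(n+(μ−1)/2){Δ_z^m v}` when `f = u + iv` satisfies `∂_z̄ Δ_z^m f = 0` and `μ` is odd:
`∂_{x₀}A − ∂_r B = ((2n+μ−1)/r) B` and `∂_{x₀}B + ∂_r A = 0`. -/
theorem vekua_system_of_polyholomorphic (μ : ℕ) (hμodd : Odd μ) (hμpos : 0 < μ)
    (m n : ℕ) (u v : ℝ × ℝ → ℝ) (Ω : Set (ℝ × ℝ)) (hΩ : IsOpen Ω)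
    (hΩpos : Ω ⊆ {p : ℝ × ℝ | 0 < p.2})
    (hu : ContDiffOn ℝ (⊤ : ℕ∞) u Ω) (hv : ContDiffOn ℝ (⊤ : ℕ∞) v Ω)
    (hCR : ∀ p ∈ Ω, pt1 (lap2^[m] u) p - pr2 (lap2^[m] v) p = 0
      ∧ pt1 (lap2^[m] v) p + pr2 (lap2^[m] u) p = 0) :
    ∀ p ∈ Ω,
      pt1 (DrOp (n + (μ - 1) / 2) (lap2^[m] u)) p
          - pr2 (DRop (n + (μ - 1) / 2) (lap2^[m] v)) p
        = ((2 * (n : ℝ) + (μ : ℝ) - 1) / p.2) * DRop (n + (μ - 1) / 2) (lap2^[m] v) p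
      ∧ pt1 (DRop (n + (μ - 1) / 2) (lap2^[m] v)) p
          + pr2 (DrOp (n + (μ - 1) / 2) (lap2^[m] u)) p = 0 := by
  intro p hp
  obtain ⟨j, hj⟩ := hμodd
  have hk : (μ - 1) / 2 = j := by omega
  have hmain := vekua_induction hΩ hΩpos (lap2^[m] u) (lap2^[m] v)
    (contDiffOn_lap2_iter hΩ hu m) (contDiffOn_lap2_iter hΩ hv m) hCR
    (n + (μ - 1) / 2) p hp
  have hc : (2 * ((n + (μ - 1) / 2 : ℕ) : ℝ)) = 2 * (n : ℝ) + (μ : ℝ) - 1 := by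
    rw [hk]
    have : (μ : ℝ) = 2 * (j : ℝ) + 1 := by exact_mod_cast congrArg (Nat.cast : ℕ → ℝ) hj
    push_cast
    rw [this]; ring
  refine ⟨?_, hmain.2⟩
  rw [← hc]
  exact hmain.1
end
end
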